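/- arXiv:1212.1579 — 4 statements merged into one kernel-verified Lean document; each statement's English description precedes it below -/
import Mathlib

section
/- As u → ∞, ξ(u) = log u + log log u + O(log log u / log u); that is, there exist constants C and u₀ ≥ 3 such that |ξ(u) − log u − log log u| ≤ C·(log log u)/(log u) for all u ≥ u₀. -/
set_option maxHeartbeats 1000000 in
/-- As `u → ∞`, `ξ(u) = log u + log log u + O(log log u / log u)`. -/
theorem xi_asymptotic (ξ : ℝ → ℝ)
    (hξ : ∀ u : ℝ, 1 < u → 0 < ξ u ∧ (Real.exp (ξ u) - 1) / ξ u = u) :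
    ∃ C u₀ : ℝ, 3 ≤ u₀ ∧ ∀ u : ℝ, u₀ ≤ u →
      |ξ u - Real.log u - Real.log (Real.log u)| ≤
        C * Real.log (Real.log u) / Real.log u := by
  refine ⟨4, 16, by norm_num, fun u hu => ?_⟩
  have hu1 : (1:ℝ) < u := by linarith
  have hu0 : (0:ℝ) < u := by linarith
  obtain ⟨hx0, heq⟩ := hξ u hu1
  set x := ξ u with hxdef
  set L := Real.log u with hLdef
  set LL := Real.log L with hLLdef
  have hexp : Real.exp x = u * x + 1 := by
    have := (div_eq_iff hx0.ne').mp heq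
    linarith
  have hux : 0 < u * x := mul_pos hu0 hx0
  have hxlog : x = Real.log (u * x + 1) := by rw [← hexp, Real.log_exp]
  -- L ≥ log 16 = 4 log 2 > exp 1 > 2
  have hlog16 : Real.log 16 = 4 * Real.log 2 := by
    rw [show (16:ℝ) = 2 ^ 4 by norm_num, Real.log_pow]; norm_num
  have hL16 : Real.log 16 ≤ L := Real.log_le_log (by norm_num) hu
  have hLe : Real.exp 1 < L := by
    have h2 := Real.log_two_gt_d9
    have h3 := Real.exp_one_lt_d9
    rw [hlog16] at hL16
    linarith
  have hL2 : (2:ℝ) ≤ L := by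
    have := Real.exp_one_gt_d9
    linarith
  have hL0 : (0:ℝ) < L := by linarith
  have hLL1 : (1:ℝ) ≤ LL := by
    have : Real.log (Real.exp 1) ≤ LL :=
      Real.log_le_log (Real.exp_pos 1) hLe.le
    rwa [Real.log_exp] at this
  -- x > 1
  have hx1 : 1 < x := by
    by_contra h
    push_neg at h
    have e1 : Real.exp (-x) * Real.exp x = 1 := by rw [← Real.exp_add]; simp
    have e2 : 1 - x ≤ Real.exp (-x) := by linarith [Real.add_one_le_exp (-x)]
    have e3 : Real.exp x ≤ Real.exp 1 := Real.exp_le_exp.mpr h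
    have e4 : (1 - x) * Real.exp x ≤ 1 := by nlinarith [Real.exp_pos x]
    have e5 : u * x = Real.exp x - 1 := by linarith
    nlinarith [Real.exp_one_lt_d9, mul_le_mul_of_nonneg_left e3 hx0.le,
      mul_le_mul_of_nonneg_right hu hx0.le]
  have hlogx0 : 0 < Real.log x := Real.log_pos hx1
  -- L + log x < x
  have hkeylt : L + Real.log x < x := by
    have h1 : Real.log (u * x) < Real.log (u * x + 1) :=
      Real.log_lt_log hux (by linarith)
    rw [Real.log_mul hu0.ne' hx0.ne'] at h1
    linarith [hxlog]
  have hLx : L < x := by linarith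
  have hLLlt : LL < Real.log x := Real.log_lt_log hL0 hLx
  have hD : 0 < x - L - LL := by linarith
  -- upper bound: x ≤ L + log x + 1/(u*x)
  have hexp' : u * x + 1 ≤ (u * x) * Real.exp (1 / (u * x)) := by
    have h := mul_le_mul_of_nonneg_left (Real.add_one_le_exp (1 / (u * x))) hux.le
    have hc : (u * x) * (1 / (u * x)) = 1 := mul_one_div_cancel hux.ne'
    nlinarith
  have hx_le : x ≤ L + Real.log x + 1 / (u * x) := by
    have h1 : Real.log (u * x + 1) ≤ Real.log ((u * x) * Real.exp (1 / (u * x))) :=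
      Real.log_le_log (by linarith) hexp'
    rw [Real.log_mul hux.ne' (Real.exp_pos _).ne', Real.log_mul hu0.ne' hx0.ne',
      Real.log_exp] at h1
    linarith [hxlog]
  -- 1/(u*x) ≤ LL/L
  have hLu : L ≤ u := by linarith [Real.log_le_sub_one_of_pos hu0]
  have hLux : L ≤ u * x := by nlinarith
  have h3 : 1 / (u * x) ≤ LL / L := by
    have h4 : 1 / (u * x) ≤ 1 / L := one_div_le_one_div_of_le hL0 hLux
    have h5 : 1 / L ≤ LL / L := by gcongr
    linarith
  -- log x ≤ LL + (x - L)/L, multiplied by L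
  have h2 : (Real.log x - LL) * L ≤ x - L := by
    have h6 : Real.log (x / L) ≤ x / L - 1 :=
      Real.log_le_sub_one_of_pos (div_pos hx0 hL0)
    rw [Real.log_div hx0.ne' hL0.ne'] at h6
    have h7 : (x / L - 1) * L = x - L := by field_simp
    calc (Real.log x - LL) * L ≤ (x / L - 1) * L := by
          exact mul_le_mul_of_nonneg_right h6 hL0.le
      _ = x - L := h7
  -- combine: x ≤ L + log x + LL/L
  have hA : x ≤ L + Real.log x + LL / L := by linarith
  -- (x - L - LL) * L ≤ (x - L) + LL
  have hB : (x - L - LL) * L ≤ (x - L) + LL := by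
    have h8 : (x - L - LL) ≤ (Real.log x - LL) + LL / L := by linarith
    have h9 : (x - L - LL) * L ≤ ((Real.log x - LL) + LL / L) * L :=
      mul_le_mul_of_nonneg_right h8 hL0.le
    have h10 : (LL / L) * L = LL := by field_simp
    nlinarith
  -- conclude
  rw [abs_of_pos hD, le_div_iff₀ hL0]
  nlinarith [mul_nonneg hD.le (by linarith : (0:ℝ) ≤ L - 2)]
end

section
/- For every u > 1 one has u·ξ(u) + Ein(−ξ(u)) = ∫₁^u ξ(t) dt, where Ein(s) = ∫₀^s (1−e^{−t})/t dt (with the integrand extended continuously by the value 1 at t = 0); equivalently, u·ξ(u) − ∫₀^{ξ(u)} (e^{s}−1)/s ds = ∫₁^u ξ(t) dt. -/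
open MeasureTheory Set Filter

noncomputable def gfun (x : ℝ) : ℝ := if x = 0 then 1 else (Real.exp x - 1) / x
noncomputable def gder (x : ℝ) : ℝ :=
  if x = 0 then 1/2 else (x * Real.exp x - Real.exp x + 1) / x ^ 2

lemma abs_exp_taylor {x : ℝ} (h : |x| ≤ 1) : |Real.exp x - (1 + x + x ^ 2 / 2)| ≤ |x| ^ 3 := by
  have h3 := Real.exp_bound h (n := 3) (by norm_num)
  have hs : (∑ i ∈ Finset.range 3, x ^ i / i.factorial) = 1 + x + x ^ 2 / 2 := by
    simp [Finset.sum_range_succ]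
    try ring
  rw [hs] at h3
  have : |x| ^ 3 * ((3 : ℕ).succ / ((3:ℕ).factorial * 3) : ℝ) ≤ |x| ^ 3 := by
    have : ((3:ℕ).succ / ((3:ℕ).factorial * 3) : ℝ) ≤ 1 := by norm_num [Nat.factorial]
    nlinarith [abs_nonneg x, pow_nonneg (abs_nonneg x) 3]
  linarith

lemma hasDerivAt_gfun (x : ℝ) : HasDerivAt gfun (gder x) x := by
  rcases eq_or_ne x 0 with rfl | hx
  · rw [hasDerivAt_iff_tendsto_slope]
    have hev : ∀ᶠ y in nhdsWithin (0:ℝ) {(0:ℝ)}ᶜ,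
        ‖slope gfun 0 y - gder 0‖ ≤ |y| := by
      filter_upwards [inter_mem_nhdsWithin {(0:ℝ)}ᶜ
        (Metric.ball_mem_nhds (0:ℝ) one_pos)] with y hy
      obtain ⟨hy0, hyb⟩ := hy
      have hy0' : y ≠ 0 := hy0
      have hyle : |y| ≤ 1 := by
        rw [Real.ball_eq_Ioo] at hyb
        rw [abs_le]; constructor <;> [linarith [hyb.1]; linarith [hyb.2]]
      have ht := abs_exp_taylor hyle
      have h2 : slope gfun 0 y - gder 0 = (Real.exp y - (1 + y + y ^ 2 / 2)) / y ^ 2 := by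
        simp only [slope, gfun, gder, vsub_eq_sub, if_neg hy0', smul_eq_mul, sub_zero,
          reduceIte]
        field_simp
        ring
      rw [Real.norm_eq_abs, h2, abs_div, abs_pow, div_le_iff₀ (by positivity)]
      calc |Real.exp y - (1 + y + y ^ 2 / 2)| ≤ |y| ^ 3 := ht
        _ = |y| * |y| ^ 2 := by ring
    have h1 : Tendsto (fun y => slope gfun 0 y - gder 0) (nhdsWithin (0:ℝ) {(0:ℝ)}ᶜ) (nhds 0) :=
      squeeze_zero_norm' hev
        (((continuous_abs.tendsto' 0 0 abs_zero)).mono_left nhdsWithin_le_nhds)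
    rwa [tendsto_sub_nhds_zero_iff] at h1
  · have h : HasDerivAt (fun y => (Real.exp y - 1) / y)
        ((Real.exp x * x - (Real.exp x - 1) * 1) / x ^ 2) x :=
      ((Real.hasDerivAt_exp x).sub_const 1).div (hasDerivAt_id x) hx
    have heq : (Real.exp x * x - (Real.exp x - 1) * 1) / x ^ 2 = gder x := by
      simp only [gder, if_neg hx]
      ring_nf
    rw [heq] at h
    refine h.congr_of_eventuallyEq ?_
    filter_upwards [eventually_ne_nhds hx] with y hy
    simp [gfun, if_neg hy]

lemma continuous_gfun : Continuous gfun :=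
  continuous_iff_continuousAt.2 fun x => (hasDerivAt_gfun x).continuousAt

lemma continuous_gder : Continuous gder := by
  rw [continuous_iff_continuousAt]
  intro x
  rcases eq_or_ne x 0 with rfl | hx
  · have hev : ∀ᶠ y in nhds (0:ℝ), ‖gder y - gder 0‖ ≤ 3 * |y| := by
      filter_upwards [Metric.ball_mem_nhds (0:ℝ) one_pos] with y hyb
      have hyle : |y| ≤ 1 := by
        rw [Real.ball_eq_Ioo] at hyb
        rw [abs_le]; constructor <;> [linarith [hyb.1]; linarith [hyb.2]]
      rcases eq_or_ne y 0 with rfl | hy0'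
      · simp
      · have ht := abs_exp_taylor hyle
        have h2 : gder y - gder 0
            = (y ^ 3 / 2 + (y - 1) * (Real.exp y - (1 + y + y ^ 2 / 2))) / y ^ 2 := by
          simp only [gder, if_neg hy0', reduceIte]
          field_simp
          ring
        rw [Real.norm_eq_abs, h2, abs_div, abs_pow, div_le_iff₀ (by positivity)]
        have hy1 : |y - 1| ≤ 2 := by
          rw [abs_le] at hyle ⊢; constructor <;> linarith [hyle.1, hyle.2]
        calc |y ^ 3 / 2 + (y - 1) * (Real.exp y - (1 + y + y ^ 2 / 2))|
            ≤ |y ^ 3 / 2| + |(y - 1)| * |Real.exp y - (1 + y + y ^ 2 / 2)| := by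
              rw [← abs_mul]; exact abs_add_le _ _
          _ ≤ |y| ^ 3 / 2 + 2 * |y| ^ 3 := by
              have : |y ^ 3 / 2| = |y| ^ 3 / 2 := by rw [abs_div, abs_pow]; norm_num
              rw [this]
              gcongr
          _ ≤ 3 * |y| * |y| ^ 2 := by nlinarith [abs_nonneg y, pow_nonneg (abs_nonneg y) 3]
    have h1 : Tendsto (fun y => gder y - gder 0) (nhds (0:ℝ)) (nhds 0) :=
      squeeze_zero_norm' hev (by
        have : Tendsto (fun y : ℝ => 3 * |y|) (nhds 0) (nhds (3 * |0|)) :=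
          (continuous_const.mul continuous_abs).tendsto 0
        simpa using this)
    rw [ContinuousAt]
    rwa [tendsto_sub_nhds_zero_iff] at h1
  · have h : ContinuousAt (fun y => (y * Real.exp y - Real.exp y + 1) / y ^ 2) x := by
      apply ContinuousAt.div
      · fun_prop
      · fun_prop
      · positivity
    refine h.congr ?_
    filter_upwards [eventually_ne_nhds hx] with y hy
    simp [gder, if_neg hy]

lemma gder_pos {x : ℝ} (hx : 0 < x) : 0 < gder x := by
  have hx0 : x ≠ 0 := ne_of_gt hx
  have key : 1 - x < Real.exp (-x) := by
    have := Real.add_one_lt_exp (x := -x) (by simpa using hx0)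
    linarith
  have hnum : 0 < x * Real.exp x - Real.exp x + 1 := by
    have hep : 0 < Real.exp x := Real.exp_pos x
    have : (1 - x) * Real.exp x < Real.exp (-x) * Real.exp x := by
      exact mul_lt_mul_of_pos_right key hep
    rw [← Real.exp_add] at this
    simp at this
    nlinarith
  simp only [gder, if_neg hx0]
  positivity

lemma gmono : StrictMonoOn gfun (Set.Ici 0) := by
  apply strictMonoOn_of_deriv_pos (convex_Ici 0) continuous_gfun.continuousOn
  intro x hx
  rw [interior_Ici] at hx
  rw [(hasDerivAt_gfun x).deriv]
  exact gder_pos hx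

/-- For every `u > 1`, `u·ξ(u) + Ein(−ξ(u)) = ∫₁^u ξ(t) dt`, where
`Ein(s) = ∫₀^s (1−e^{−t})/t dt` (integrand extended by `1` at `t = 0`);
equivalently `u·ξ(u) − ∫₀^{ξ(u)} (e^s−1)/s ds = ∫₁^u ξ(t) dt`. -/
theorem xi_integral_identity (ξ : ℝ → ℝ)
    (hξ1 : ξ 1 = 0)
    (hξ : ∀ u : ℝ, 1 < u → 0 < ξ u ∧ (Real.exp (ξ u) - 1) / ξ u = u) :
    ∀ u : ℝ, 1 < u →
      u * ξ u + (∫ t in (0:ℝ)..(-ξ u), (if t = 0 then 1 else (1 - Real.exp (-t)) / t)) =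
        (∫ t in (1:ℝ)..u, ξ t) ∧
      u * ξ u - (∫ s in (0:ℝ)..(ξ u), (if s = 0 then 1 else (Real.exp s - 1) / s)) =
        (∫ t in (1:ℝ)..u, ξ t) := by
  have g0 : gfun 0 = 1 := by simp [gfun]
  have hxig : ∀ x : ℝ, 0 ≤ x → ξ (gfun x) = x := by
    intro x hx
    rcases eq_or_lt_of_le hx with rfl | hx'
    · rw [g0, hξ1]
    · have hg1 : 1 < gfun x := by
        rw [← g0]
        exact gmono (Set.mem_Ici.mpr (le_refl 0)) (Set.mem_Ici.mpr (le_of_lt hx')) hx'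
      obtain ⟨hpos, heq⟩ := hξ (gfun x) hg1
      have hne : ξ (gfun x) ≠ 0 := ne_of_gt hpos
      have : gfun (ξ (gfun x)) = gfun x := by
        rw [gfun, if_neg hne]; exact heq
      exact gmono.injOn (Set.mem_Ici.mpr (le_of_lt hpos)) (Set.mem_Ici.mpr (le_of_lt hx')) this
  have ximono : MonotoneOn ξ (Set.Ici 1) := by
    intro a ha b hb hab
    rcases eq_or_lt_of_le (Set.mem_Ici.mp ha : (1:ℝ) ≤ a) with rfl | ha'
    · rw [hξ1]
      rcases eq_or_lt_of_le (Set.mem_Ici.mp hb : (1:ℝ) ≤ b) with rfl | hb'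
      · rw [hξ1]
      · exact le_of_lt (hξ b hb').1
    · have hb' : 1 < b := lt_of_lt_of_le ha' hab
      obtain ⟨hpa, hea⟩ := hξ a ha'
      obtain ⟨hpb, heb⟩ := hξ b hb'
      by_contra hcon
      push_neg at hcon
      have : gfun (ξ b) < gfun (ξ a) := gmono (Set.mem_Ici.mpr (le_of_lt hpb)) (Set.mem_Ici.mpr (le_of_lt hpa)) hcon
      simp only [gfun] at this
      rw [if_neg (ne_of_gt hpa), if_neg (ne_of_gt hpb), hea, heb] at this
      exact absurd hab (not_le.mpr this)
  intro u hu
  set y := ξ u with hy_def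
  obtain ⟨hy, hgyeq⟩ := hξ u hu
  have hgy : gfun y = u := by rw [gfun, if_neg (ne_of_gt hy)]; exact hgyeq
  -- image facts
  have himg : ∀ x ∈ Set.Icc (0:ℝ) y, gfun x ∈ Set.Icc 1 u := by
    intro x hx
    constructor
    · rw [← g0]; exact gmono.monotoneOn (Set.self_mem_Ici) (Set.mem_Ici.mpr hx.1) hx.1
    · rw [← hgy]
      exact gmono.monotoneOn (Set.mem_Ici.mpr hx.1) (Set.mem_Ici.mpr (le_trans hx.1 hx.2)) hx.2
  -- integrability of ξ on [1,u]
  have hxi_int : IntegrableOn ξ (Set.Icc 1 u) := by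
    exact (ximono.mono (Set.Icc_subset_Ici_self)).integrableOn_isCompact isCompact_Icc
  -- continuity of ξ on (1,∞)
  have hxi_cont : ∀ t : ℝ, 1 < t → ContinuousAt ξ t := by
    intro t ht
    apply continuousAt_of_monotoneOn_of_image_mem_nhds
      (ximono.mono (Set.Ioi_subset_Ici_self)) (Ioi_mem_nhds ht)
    have hsub : Set.Ioi (0:ℝ) ⊆ ξ '' Set.Ioi 1 := by
      intro x hx
      refine ⟨gfun x, ?_, hxig x (le_of_lt hx)⟩
      rw [Set.mem_Ioi, ← g0]
      exact gmono (Set.mem_Ici.mpr (le_refl 0)) (Set.mem_Ici.mpr (le_of_lt hx)) hx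
    exact mem_of_superset (Ioi_mem_nhds (hξ t ht).1) hsub
  -- substitution
  have huIcc : Set.uIcc (0:ℝ) y = Set.Icc 0 y := Set.uIcc_of_le hy.le
  have hmin : min (0:ℝ) y = 0 := min_eq_left hy.le
  have hmax : max (0:ℝ) y = y := max_eq_right hy.le
  have hsub : (∫ x in (0:ℝ)..y, gder x • (ξ ∘ gfun) x) = ∫ t in (gfun 0)..(gfun y), ξ t := by
    apply intervalIntegral.integral_comp_smul_deriv''' (continuous_gfun.continuousOn)
    · intro x _
      exact (hasDerivAt_gfun x).hasDerivWithinAt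
    · rw [hmin, hmax]
      rintro t ⟨x, hx, rfl⟩
      exact (hxi_cont _ (by rw [← g0]; exact gmono (Set.mem_Ici.mpr (le_refl 0)) (Set.mem_Ici.mpr hx.1.le) hx.1)).continuousWithinAt
    · apply hxi_int.mono_set
      rw [huIcc]
      rintro t ⟨x, hx, rfl⟩
      exact himg x hx
    · rw [huIcc]
      apply IntegrableOn.congr_fun ((continuous_gder.mul continuous_id).integrableOn_Icc)
        ?_ measurableSet_Icc
      intro x hx
      simp only [Function.comp_apply, hxig x hx.1, smul_eq_mul, continuous_id, id, Pi.mul_apply]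
  have hcongr : (∫ x in (0:ℝ)..y, gder x • (ξ ∘ gfun) x) = ∫ x in (0:ℝ)..y, x * gder x := by
    apply intervalIntegral.integral_congr
    intro x hx
    rw [huIcc] at hx
    show gder x • (ξ ∘ gfun) x = x * gder x
    rw [Function.comp_apply, hxig x hx.1, smul_eq_mul, mul_comm]
  -- FTC
  have hΦ : ∀ x : ℝ, HasDerivAt (fun z => z * gfun z - ∫ s in (0:ℝ)..z, gfun s)
      (x * gder x) x := by
    intro x
    have h1 : HasDerivAt (fun z => z * gfun z) (1 * gfun x + x * gder x) x :=
      (hasDerivAt_id x).mul (hasDerivAt_gfun x)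
    have h2 : HasDerivAt (fun z => ∫ s in (0:ℝ)..z, gfun s) (gfun x) x :=
      intervalIntegral.integral_hasDerivAt_right
        (continuous_gfun.intervalIntegrable 0 x)
        (continuous_gfun.stronglyMeasurableAtFilter _ _)
        continuous_gfun.continuousAt
    have h3 := h1.sub h2
    refine h3.congr_deriv ?_
    ring
  have hftc : (∫ x in (0:ℝ)..y, x * gder x)
      = (y * gfun y - ∫ s in (0:ℝ)..y, gfun s)
        - (0 * gfun 0 - ∫ s in (0:ℝ)..(0:ℝ), gfun s) :=
    intervalIntegral.integral_eq_sub_of_hasDerivAt (fun x _ => hΦ x)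
      ((continuous_id.mul continuous_gder).intervalIntegrable 0 y)
  rw [intervalIntegral.integral_same] at hftc
  have hmain : y * u - (∫ s in (0:ℝ)..y, gfun s) = ∫ t in (1:ℝ)..u, ξ t := by
    rw [g0, hgy] at hsub
    rw [← hsub, hcongr, hftc, hgy]
    ring
  have hGdef : (∫ s in (0:ℝ)..y, (if s = 0 then 1 else (Real.exp s - 1) / s))
      = ∫ s in (0:ℝ)..y, gfun s := rfl
  have hEin : (∫ t in (0:ℝ)..(-y), (if t = 0 then 1 else (1 - Real.exp (-t)) / t))
      = -(∫ s in (0:ℝ)..y, gfun s) := by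
    have h1 := intervalIntegral.integral_comp_neg (a := (0:ℝ)) (b := y)
      (fun t => if t = 0 then 1 else (1 - Real.exp (-t)) / t)
    have h2 : (∫ x in (0:ℝ)..y,
        (fun t => if t = 0 then 1 else (1 - Real.exp (-t)) / t) (-x))
        = ∫ s in (0:ℝ)..y, gfun s := by
      apply intervalIntegral.integral_congr
      intro x _
      show (if -x = 0 then (1:ℝ) else (1 - Real.exp (-(-x))) / (-x)) = gfun x
      rcases eq_or_ne x 0 with rfl | hx0
      · simp [gfun]
      · rw [if_neg (by simpa using hx0), gfun, if_neg hx0, neg_neg, div_neg, ← neg_div,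
          neg_sub]
    rw [h2, neg_zero] at h1
    have h3 := intervalIntegral.integral_symm (f := fun t : ℝ =>
      if t = 0 then (1:ℝ) else (1 - Real.exp (-t)) / t) (μ := volume) 0 (-y)
    rw [h3] at h1
    linarith [h1]
  constructor
  · rw [hEin]
    linarith [hmain]
  · rw [hGdef]
    linarith [hmain]
end

section
/- (Evertse–Moree–Stewart–Tijdeman bounds) For every u ≥ 1, exp( −∫₂^{u+1} ξ(t) dt ) ≤ ρ(u) ≤ exp( −∫₁^{u} ξ(t) dt ). -/
open MeasureTheory Real Set


lemma exp_lb4 (x : ℝ) (h0 : 0 ≤ x) :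
    1 + x + x^2/2 + x^3/6 + x^4/24 ≤ Real.exp x := by
  have h := Real.sum_le_exp_of_nonneg h0 5
  have : ∑ i ∈ Finset.range 5, x ^ i / (Nat.factorial i) =
      1 + x + x^2/2 + x^3/6 + x^4/24 := by
    simp [Finset.sum_range_succ, Nat.factorial]
  linarith [this ▸ h]

lemma exp_ub6 (x : ℝ) (h0 : 0 ≤ x) (h1 : x ≤ 1) :
    Real.exp x ≤ 1 + x + x^2/2 + x^3/6 + x^4/24 + x^5/120 + x^6/500 := by
  have habs : |x| ≤ 1 := by rw [abs_of_nonneg h0]; exact h1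
  have h := Real.exp_bound habs (n := 6) (by norm_num)
  have hs : ∑ m ∈ Finset.range 6, x ^ m / (Nat.factorial m) =
      1 + x + x^2/2 + x^3/6 + x^4/24 + x^5/120 := by
    simp [Finset.sum_range_succ, Nat.factorial]
  rw [hs, abs_of_nonneg h0] at h
  have h6 : x^6 * ((6:ℕ).succ / ((Nat.factorial 6 : ℕ) * (6:ℕ))) ≤ x^6 / 500 := by
    have : ((6:ℕ).succ / ((Nat.factorial 6 : ℕ) * (6:ℕ)) : ℝ) = 7/4320 := by
      norm_num [Nat.factorial]
    rw [this]
    nlinarith [pow_nonneg h0 6]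
  have := abs_le.mp h
  linarith [this.2]

lemma exp_neg_ub (x : ℝ) (h0 : 0 ≤ x) : Real.exp (-x) ≤ 1 - x + x^2/2 := by
  have hl : 1 + x + x^2/2 ≤ Real.exp x := by
    have := exp_lb4 x h0
    nlinarith [pow_nonneg h0 3, pow_nonneg h0 4]
  have hpos : (0:ℝ) < 1 + x + x^2/2 := by nlinarith [sq_nonneg x]
  rw [Real.exp_neg]
  rw [inv_le_iff_one_le_mul₀] -- maybe wrong name
  · nlinarith [sq_nonneg (x^2)]
  · exact lt_of_lt_of_le (by positivity) hl

lemma slope_exp {x y : ℝ} (hx : 0 < x) (hxy : x < y) :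
    (Real.exp x - 1) / x < (Real.exp y - 1) / y := by
  have h := strictConvexOn_exp.slope_strict_mono_adjacent (x := 0) (y := x) (z := y)
    (Set.mem_univ _) (Set.mem_univ _) hx hxy
  rw [Real.exp_zero] at h
  have hy : 0 < y := hx.trans hxy
  rw [div_lt_div_iff₀ hx hy]
  rw [div_lt_div_iff₀ (by linarith : (0:ℝ) < x - 0) (by linarith : (0:ℝ) < y - x)] at h
  nlinarith

lemma integral_exp_aff (c u : ℝ) (hc : c ≠ 0) :
    ∫ t in (u-1)..u, Real.exp (c*(u-t)) = (Real.exp c - 1)/c := by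
  have h1 : ∫ t in (u-1)..u, Real.exp (c*(u-t)) = ∫ s in (0:ℝ)..1, Real.exp (c*s) := by
    have := intervalIntegral.integral_comp_sub_left (a := u-1) (b := u)
      (fun s => Real.exp (c*s)) u
    simpa using this
  rw [h1]
  have h2 := intervalIntegral.integral_comp_mul_left (a := (0:ℝ)) (b := 1)
    (fun s => Real.exp s) hc
  simp only [integral_exp, mul_zero, mul_one, Real.exp_zero] at h2
  rw [h2, smul_eq_mul]
  field_simp

lemma gronwall (w : ℝ → ℝ) (a b : ℝ) (ha : 1 ≤ a) (hab : a ≤ b)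
    (hw : ContinuousOn w (Set.Icc (a-1) b))
    (hbase : ∀ t ∈ Set.Icc (a-1) a, 0 ≤ w t)
    (hrec : ∀ u, a < u → u ≤ b → (∫ t in (u-1)..u, w t) ≤ u * w u) :
    ∀ t ∈ Set.Icc (a-1) b, 0 ≤ w t := by
  have hsub : Set.Icc a b ⊆ Set.Icc (a-1) b := Set.Icc_subset_Icc (by linarith) le_rfl
  obtain ⟨x, hxmem, hxmin⟩ := (isCompact_Icc (a := a) (b := b)).exists_isMinOn
    (Set.nonempty_Icc.2 hab) (hw.mono hsub)
  by_cases hm : 0 ≤ w x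
  · intro t ht
    rcases le_total t a with h | h
    · exact hbase t ⟨ht.1, h⟩
    · exact le_trans hm (hxmin ⟨h, ht.2⟩)
  push_neg at hm
  exfalso
  have hxa : a < x := by
    rcases lt_or_eq_of_le hxmem.1 with h | h
    · exact h
    · exfalso; exact absurd (hbase x ⟨by linarith [hxmem.1], h.symm.le⟩) (not_le.2 hm)
  have hx1 : 1 < x := lt_of_le_of_lt ha hxa
  have hkey := hrec x hxa hxmem.2
  have hint : ∀ p q, a - 1 ≤ p → p ≤ b → a - 1 ≤ q → q ≤ b →
      IntervalIntegrable w volume p q := fun p q h1 h2 h3 h4 =>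
    (hw.mono (Set.uIcc_subset_Icc ⟨h1, h2⟩ ⟨h3, h4⟩)).intervalIntegrable
  have hx1b : a - 1 ≤ x - 1 := by linarith
  have hxb : x - 1 ≤ b := by linarith [hxmem.2]
  -- lower bound the integral
  have hwx := hm.le
  rcases le_total (x - 1) a with hca | hca
  · -- split at a
    have hsplit : (∫ t in (x-1)..x, w t) =
        (∫ t in (x-1)..a, w t) + ∫ t in a..x, w t :=
      (intervalIntegral.integral_add_adjacent_intervals
        (hint _ _ hx1b (by linarith) (by linarith) hab)
        (hint _ _ (by linarith) hab (by linarith) hxmem.2)).symm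
    have h1 : 0 ≤ ∫ t in (x-1)..a, w t := by
      apply intervalIntegral.integral_nonneg hca
      intro t ht
      exact hbase t ⟨by linarith [ht.1], ht.2⟩
    have h2 : (x - a) * w x ≤ ∫ t in a..x, w t := by
      have := intervalIntegral.integral_mono_on (a := a) (b := x) (μ := volume)
        hxa.le (intervalIntegrable_const (c := w x))
        (hint _ _ (by linarith) (by linarith [hxmem.2]) (by linarith) hxmem.2)
        (fun t ht => hxmin ⟨ht.1, le_trans ht.2 hxmem.2⟩)
      simpa using this
    nlinarith [hkey, hsplit]
  · -- whole interval within [a, b]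
    have h2 : (x - (x-1)) * w x ≤ ∫ t in (x-1)..x, w t := by
      have := intervalIntegral.integral_mono_on (a := x-1) (b := x) (μ := volume)
        (by linarith) (intervalIntegrable_const (c := w x))
        (hint _ _ hx1b hxb (by linarith) hxmem.2)
        (fun t ht => hxmin ⟨by linarith [ht.1], le_trans ht.2 hxmem.2⟩)
      simpa using this
    nlinarith [hkey]

set_option maxHeartbeats 2000000 in
/-- Evertse–Moree–Stewart–Tijdeman bounds: for every `u ≥ 1`,
`exp(−∫₂^{u+1} ξ(t) dt) ≤ ρ(u) ≤ exp(−∫₁^u ξ(t) dt)`. -/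
theorem dickman_EMST_bounds (ρ ξ : ℝ → ℝ)
    (hρcont : ContinuousOn ρ (Set.Ici 0))
    (hρ1 : ∀ u : ℝ, 0 ≤ u → u ≤ 1 → ρ u = 1)
    (hρ2 : ∀ u : ℝ, 1 < u → ρ u = (1 / u) * ∫ t in (0:ℝ)..1, ρ (u - t))
    (hξ0 : ∀ t : ℝ, 0 ≤ t → t ≤ 1 → ξ t = 0)
    (hξ : ∀ u : ℝ, 1 < u → 0 < ξ u ∧ (Real.exp (ξ u) - 1) / ξ u = u) :
    ∀ u : ℝ, 1 ≤ u →
      Real.exp (-∫ t in (2:ℝ)..(u + 1), ξ t) ≤ ρ u ∧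
        ρ u ≤ Real.exp (-∫ t in (1:ℝ)..u, ξ t) := by
  have hξpos : ∀ t : ℝ, 1 < t → 0 < ξ t := fun t ht => (hξ t ht).1
  have hξeq : ∀ t : ℝ, 1 < t → Real.exp (ξ t) - 1 = t * ξ t := by
    intro t ht
    have h := (hξ t ht).2
    rw [div_eq_iff (hξpos t ht).ne'] at h
    linarith
  have hξnn : ∀ t : ℝ, 0 ≤ t → 0 ≤ ξ t := by
    intro t ht
    rcases le_total t 1 with h | h
    · rw [hξ0 t ht h]
    · rcases eq_or_lt_of_le h with h' | h'
      · rw [← h', hξ0 1 zero_le_one le_rfl]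
      · exact (hξpos t h').le
  have hξmono : MonotoneOn ξ (Set.Ici 0) := by
    intro s hs t ht hst
    rcases le_total s 1 with hs1 | hs1
    · rw [hξ0 s hs hs1]; exact hξnn t (hs.trans hst)
    · rcases eq_or_lt_of_le hs1 with hs1' | hs1'
      · rw [← hs1', hξ0 1 zero_le_one le_rfl]; exact hξnn t (hs.trans hst)
      · have ht1 : 1 < t := lt_of_lt_of_le hs1' hst
        by_contra hcon
        push_neg at hcon
        have hslope := slope_exp (hξpos t ht1) hcon
        rw [(hξ t ht1).2, (hξ s hs1').2] at hslope
        linarith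
  have hξge : ∀ c t : ℝ, 0 < c → 1 < t → Real.exp c - 1 ≤ t * c → c ≤ ξ t := by
    intro c t hc ht hect
    by_contra hcon
    push_neg at hcon
    have hslope := slope_exp (hξpos t ht) hcon
    rw [(hξ t ht).2] at hslope
    rw [lt_div_iff₀ hc] at hslope
    linarith
  have hξint : ∀ p q : ℝ, 0 ≤ p → 0 ≤ q → IntervalIntegrable ξ volume p q := by
    intro p q hp hq
    exact (hξmono.mono (Set.uIcc_subset_Icc ⟨hp, le_max_left p q⟩
      ⟨hq, le_max_right p q⟩ |>.trans (Set.Icc_subset_Ici_self))).intervalIntegrable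
  -- lower bound for integrals of ξ by constants
  have hintlb : ∀ p q c : ℝ, 0 ≤ p → p ≤ q → c ≤ ξ p →
      c * (q - p) ≤ ∫ t in p..q, ξ t := by
    intro p q c hp hpq hc
    have := intervalIntegral.integral_mono_on (a := p) (b := q) (μ := volume)
      hpq (intervalIntegrable_const (c := c)) (hξint p q hp (by linarith))
      (fun t ht => le_trans hc (hξmono (Set.mem_Ici.2 hp)
        (Set.mem_Ici.2 (by linarith [ht.1])) ht.1))
    simpa [mul_comm] using this
  have hintub : ∀ p q c : ℝ, 0 ≤ p → p ≤ q → ξ q ≤ c →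
      (∫ t in p..q, ξ t) ≤ c * (q - p) := by
    intro p q c hp hpq hc
    have := intervalIntegral.integral_mono_on (a := p) (b := q) (μ := volume)
      hpq (hξint p q hp (by linarith)) (intervalIntegrable_const (c := c))
      (fun t ht => le_trans (hξmono (Set.mem_Ici.2 (le_trans hp ht.1))
        (Set.mem_Ici.2 (by linarith)) ht.2) hc)
    simpa [mul_comm] using this
  -- ρ facts
  have hρint : ∀ p q : ℝ, 0 ≤ p → 0 ≤ q → IntervalIntegrable ρ volume p q := by
    intro p q hp hq
    exact (hρcont.mono (Set.uIcc_subset_Icc ⟨hp, le_max_left p q⟩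
      ⟨hq, le_max_right p q⟩ |>.trans (Set.Icc_subset_Ici_self))).intervalIntegrable
  have hρid : ∀ u : ℝ, 1 < u → u * ρ u = ∫ t in (u-1)..u, ρ t := by
    intro u hu
    have h := hρ2 u hu
    have hc : (∫ t in (0:ℝ)..1, ρ (u - t)) = ∫ t in (u-1)..u, ρ t := by
      have := intervalIntegral.integral_comp_sub_left (a := (0:ℝ)) (b := 1) ρ u
      simpa using this
    rw [hc] at h
    rw [h]
    field_simp
  -- the two comparison functions
  set h : ℝ → ℝ := fun t => Real.exp (-∫ s in (1:ℝ)..t, ξ s) with hh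
  set g : ℝ → ℝ := fun t => Real.exp (-∫ s in (2:ℝ)..(t+1), ξ s) with hg
  have hcont_h : ∀ B : ℝ, 1 ≤ B → ContinuousOn h (Set.Icc 0 B) := by
    intro B hB
    have hprim : ContinuousOn (fun x => ∫ s in (1:ℝ)..x, ξ s) (Set.uIcc 0 B) :=
      intervalIntegral.continuousOn_primitive_interval'
        (hξint 0 B le_rfl (by linarith))
        (by rw [Set.uIcc_of_le (by linarith : (0:ℝ) ≤ B)]; exact ⟨zero_le_one, hB⟩)
    rw [Set.uIcc_of_le (by linarith : (0:ℝ) ≤ B)] at hprim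
    exact Real.continuous_exp.comp_continuousOn hprim.neg
  have hcont_g : ∀ B : ℝ, 1 ≤ B → ContinuousOn g (Set.Icc 0 B) := by
    intro B hB
    have hprim : ContinuousOn (fun x => ∫ s in (2:ℝ)..x, ξ s) (Set.uIcc 0 (B+1)) :=
      intervalIntegral.continuousOn_primitive_interval'
        (hξint 0 (B+1) le_rfl (by linarith))
        (by rw [Set.uIcc_of_le (by linarith : (0:ℝ) ≤ B+1)]
            exact ⟨by norm_num, by linarith⟩)
    rw [Set.uIcc_of_le (by linarith : (0:ℝ) ≤ B+1)] at hprim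
    have hmap : Set.MapsTo (fun t : ℝ => t + 1) (Set.Icc 0 B) (Set.Icc 0 (B+1)) := by
      intro t ht
      simp only [Set.mem_Icc] at ht ⊢
      constructor <;> linarith [ht.1, ht.2]
    exact Real.continuous_exp.comp_continuousOn
      ((hprim.comp (Continuous.continuousOn (by continuity)) hmap).neg)
  -- key mean inequality for h
  have hH : ∀ v : ℝ, 1 < v → (∫ t in (v-1)..v, h t) ≤ v * h v := by
    intro v hv
    have hv0 : (0:ℝ) ≤ v - 1 := by linarith
    have hxiv : 0 < ξ v := hξpos v hv
    -- pointwise bound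
    have hpt : ∀ t ∈ Set.Icc (v-1) v, h t ≤ h v * Real.exp (ξ v * (v - t)) := by
      intro t ht
      have hsplit : (∫ s in (1:ℝ)..t, ξ s) + (∫ s in t..v, ξ s) = ∫ s in (1:ℝ)..v, ξ s :=
        intervalIntegral.integral_add_adjacent_intervals
          (hξint 1 t zero_le_one (by linarith [ht.1]))
          (hξint t v (by linarith [ht.1]) (by linarith))
      have hb : (∫ s in t..v, ξ s) ≤ ξ v * (v - t) := hintub t v (ξ v)
        (by linarith [ht.1]) ht.2 le_rfl
      have : h t = h v * Real.exp (∫ s in t..v, ξ s) := by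
        rw [hh]
        simp only
        rw [← Real.exp_add]
        congr 1
        linarith [hsplit]
      rw [this]
      have := Real.exp_le_exp.2 hb
      have hpos : 0 < h v := Real.exp_pos _
      nlinarith
    have hint1 : IntervalIntegrable h volume (v-1) v :=
      ((hcont_h v (by linarith)).mono (Set.uIcc_subset_Icc ⟨hv0, by linarith⟩
        ⟨by linarith, le_rfl⟩)).intervalIntegrable
    have hint2 : IntervalIntegrable (fun t => h v * Real.exp (ξ v * (v - t)))
        volume (v-1) v := by
      have hc2 : Continuous fun t : ℝ => h v * Real.exp (ξ v * (v - t)) :=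
        continuous_const.mul (Real.continuous_exp.comp
          (continuous_const.mul (continuous_const.sub continuous_id)))
      exact hc2.intervalIntegrable _ _
    have hmono := intervalIntegral.integral_mono_on (by linarith : v - 1 ≤ v)
      hint1 hint2 hpt
    have hcalc : (∫ t in (v-1)..v, h v * Real.exp (ξ v * (v - t))) = v * h v := by
      rw [intervalIntegral.integral_const_mul, integral_exp_aff (ξ v) v hxiv.ne',
        hξeq v hv]
      field_simp
    linarith [hmono]
  -- key mean inequality for g
  have hG : ∀ v : ℝ, 1 < v → v * g v ≤ ∫ t in (v-1)..v, g t := by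
    intro v hv
    have hv0 : (0:ℝ) ≤ v - 1 := by linarith
    have hxiv : 0 < ξ v := hξpos v hv
    have hpt : ∀ t ∈ Set.Icc (v-1) v, g v * Real.exp (ξ v * (v - t)) ≤ g t := by
      intro t ht
      have hsplit : (∫ s in (2:ℝ)..(t+1), ξ s) + (∫ s in (t+1)..(v+1), ξ s)
          = ∫ s in (2:ℝ)..(v+1), ξ s :=
        intervalIntegral.integral_add_adjacent_intervals
          (hξint 2 (t+1) (by norm_num) (by linarith [ht.1]))
          (hξint (t+1) (v+1) (by linarith [ht.1]) (by linarith))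
      have hb : ξ v * ((v+1) - (t+1)) ≤ ∫ s in (t+1)..(v+1), ξ s := by
        apply hintlb (t+1) (v+1) (ξ v) (by linarith [ht.1]) (by linarith [ht.2])
        exact hξmono (Set.mem_Ici.2 (by linarith)) (Set.mem_Ici.2 (by linarith [ht.1]))
          (by linarith [ht.1])
      have hgt : g t = g v * Real.exp (∫ s in (t+1)..(v+1), ξ s) := by
        rw [hg]
        simp only
        rw [← Real.exp_add]
        congr 1
        linarith [hsplit]
      rw [hgt]
      have hb' : ξ v * (v - t) ≤ ∫ s in (t+1)..(v+1), ξ s := by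
        have : (v+1) - (t+1) = v - t := by ring
        rw [this] at hb; exact hb
      have := Real.exp_le_exp.2 hb'
      have hpos : 0 < g v := Real.exp_pos _
      nlinarith
    have hint1 : IntervalIntegrable g volume (v-1) v :=
      ((hcont_g v (by linarith)).mono (Set.uIcc_subset_Icc ⟨hv0, by linarith⟩
        ⟨by linarith, le_rfl⟩)).intervalIntegrable
    have hint2 : IntervalIntegrable (fun t => g v * Real.exp (ξ v * (v - t)))
        volume (v-1) v := by
      have hc2 : Continuous fun t : ℝ => g v * Real.exp (ξ v * (v - t)) :=
        continuous_const.mul (Real.continuous_exp.comp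
          (continuous_const.mul (continuous_const.sub continuous_id)))
      exact hc2.intervalIntegrable _ _
    have hmono := intervalIntegral.integral_mono_on (by linarith : v - 1 ≤ v)
      hint2 hint1 hpt
    have hcalc : (∫ t in (v-1)..v, g v * Real.exp (ξ v * (v - t))) = v * g v := by
      rw [intervalIntegral.integral_const_mul, integral_exp_aff (ξ v) v hxiv.ne',
        hξeq v hv]
      field_simp
    linarith [hmono]
  -- explicit formula for ρ on [1,2]
  set ψ : ℝ → ℝ := fun t => 1 - Real.log (max t 1) with hψ
  have hψcont : Continuous ψ := by
    apply continuous_const.sub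
    exact Continuous.log (continuous_id.max continuous_const)
      (fun x => by positivity)
  have hψid : ∀ v : ℝ, 1 < v → v ≤ 2 → (∫ t in (v-1)..v, ψ t) = v * (1 - Real.log v) := by
    intro v hv hv2
    have hsplit : (∫ t in (v-1)..(1:ℝ), ψ t) + (∫ t in (1:ℝ)..v, ψ t)
        = ∫ t in (v-1)..v, ψ t :=
      intervalIntegral.integral_add_adjacent_intervals
        (hψcont.intervalIntegrable _ _) (hψcont.intervalIntegrable _ _)
    have h1 : (∫ t in (v-1)..(1:ℝ), ψ t) = 2 - v := by
      have hcg : Set.EqOn ψ (fun _ => (1:ℝ)) (Set.uIcc (v-1) 1) := by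
        intro t ht
        rw [Set.uIcc_of_le (by linarith : v - 1 ≤ 1)] at ht
        have : max t 1 = 1 := max_eq_right ht.2
        simp [hψ, this]
      rw [intervalIntegral.integral_congr hcg]
      simp
      ring
    have h2 : (∫ t in (1:ℝ)..v, ψ t) = (v - 1) - (v * Real.log v - v + 1) := by
      have hcg : Set.EqOn ψ (fun t => 1 - Real.log t) (Set.uIcc 1 v) := by
        intro t ht
        rw [Set.uIcc_of_le (by linarith : (1:ℝ) ≤ v)] at ht
        have : max t 1 = t := max_eq_left ht.1
        simp [hψ, this]
      rw [intervalIntegral.integral_congr hcg]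
      have hlogint : IntervalIntegrable Real.log volume 1 v := by
        apply ContinuousOn.intervalIntegrable
        apply Real.continuousOn_log.mono
        intro t ht
        rw [Set.uIcc_of_le (by linarith : (1:ℝ) ≤ v)] at ht
        simp only [Set.mem_compl_iff, Set.mem_singleton_iff]
        intro h0
        rw [h0] at ht
        linarith [ht.1]
      rw [intervalIntegral.integral_sub (intervalIntegrable_const) hlogint]
      rw [integral_log]
      simp
    rw [← hsplit, h1, h2]
    ring
  have hψval : ∀ v : ℝ, 1 ≤ v → ψ v = 1 - Real.log v := by
    intro v hv
    simp [hψ, max_eq_left hv]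
  have hρ12 : ∀ v : ℝ, 1 ≤ v → v ≤ 2 → ρ v = 1 - Real.log v := by
    have hwcont : ContinuousOn (fun t => ρ t - ψ t) (Set.Icc (1-1 : ℝ) 2) := by
      apply ContinuousOn.sub
      · exact hρcont.mono (by intro t ht; simpa using ht.1)
      · exact hψcont.continuousOn
    have hrec0 : ∀ v : ℝ, 1 < v → v ≤ 2 →
        (∫ t in (v-1)..v, (ρ t - ψ t)) = v * (ρ v - ψ v) := by
      intro v hv hv2
      rw [intervalIntegral.integral_sub
        (hρint (v-1) v (by linarith) (by linarith)) (hψcont.intervalIntegrable _ _)]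
      rw [← hρid v hv, hψid v hv hv2, hψval v (by linarith)]
      ring
    have hbase0 : ∀ t : ℝ, 0 ≤ t → t ≤ 1 → ρ t - ψ t = 0 := by
      intro t h0 h1
      rw [hρ1 t h0 h1]
      simp [hψ, max_eq_right h1]
    have hge := gronwall (fun t => ρ t - ψ t) 1 2 le_rfl (by norm_num)
      (by norm_num at hwcont ⊢; exact hwcont)
      (fun t ht => by
        have h0 := hbase0 t (by linarith [ht.1]) ht.2
        simpa using h0.ge)
      (fun v hv hv2 => (hrec0 v hv hv2).le)
    have hle := gronwall (fun t => ψ t - ρ t) 1 2 le_rfl (by norm_num)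
      (by
        have : ContinuousOn (fun t => ψ t - ρ t) (Set.Icc (1-1 : ℝ) 2) :=
          ContinuousOn.sub hψcont.continuousOn
            (hρcont.mono (by intro t ht; simpa using ht.1))
        norm_num at this ⊢
        exact this)
      (fun t ht => by
        have h0 := hbase0 t (by linarith [ht.1]) ht.2
        simpa using (by linarith : (0:ℝ) ≤ ψ t - ρ t))
      (fun v hv hv2 => by
        have heq := hrec0 v hv hv2
        have hint1 := hρint (v-1) v (by linarith) (by linarith)
        have hint2 := hψcont.intervalIntegrable (μ := volume) (v-1) v
        have hkey : (∫ t in (v-1)..v, (ψ t - ρ t)) = v * (ψ v - ρ v) := by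
          rw [intervalIntegral.integral_sub hint2 hint1]
          rw [intervalIntegral.integral_sub hint1 hint2] at heq
          linarith
        simpa using hkey.le)
    intro v hv hv2
    have h1 := hge v ⟨by linarith, hv2⟩
    have h2 := hle v ⟨by linarith, hv2⟩
    have := hψval v hv
    linarith
  -- numeric helpers
  have hxival : ∀ c t : ℝ, 0 < c → c ≤ 2 → 1 < t →
      (1 + c/2 + (c/2)^2/2 + (c/2)^3/6 + (c/2)^4/24 + (c/2)^5/120 + (c/2)^6/500)^2
        ≤ 1 + t*c → c ≤ ξ t := by
    intro c t hc hc2 ht hnum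
    apply hξge c t hc ht
    have hub := exp_ub6 (c/2) (by linarith) (by linarith)
    have hsq : Real.exp c = Real.exp (c/2) * Real.exp (c/2) := by
      rw [← Real.exp_add]; ring_nf
    nlinarith [Real.exp_pos (c/2)]
  have hexpneg : ∀ C U : ℝ, 0 ≤ C → 0 < U →
      1 ≤ U * (1 + C + C^2/2 + C^3/6 + C^4/24) → Real.exp (-C) ≤ U := by
    intro C U h1 h2 h3
    have h4 := exp_lb4 C h1
    have h5 : Real.exp (-C) * Real.exp C = 1 := by
      rw [← Real.exp_add]; simp
    nlinarith [Real.exp_pos (-C), Real.exp_pos C]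
  have hlogub : ∀ a L : ℝ, 0 < a → 0 ≤ L → a ≤ 1 + L + L^2/2 + L^3/6 + L^4/24 →
      Real.log a ≤ L := by
    intro a L ha hL hnum
    rw [Real.log_le_iff_le_exp ha]
    exact le_trans hnum (exp_lb4 L hL)
  -- the generic grid step
  have hstep : ∀ aj cj Cj Uj Lj : ℝ, 1 ≤ aj → aj + 1/8 ≤ 2 →
      0 < cj → cj ≤ ξ (aj + 1) →
      Cj ≤ (∫ s in (2:ℝ)..(aj+1), ξ s) →
      Real.exp (-Cj) ≤ Uj → Real.log aj ≤ Lj →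
      (∀ s : ℝ, 0 ≤ s → s ≤ 1/8 → Uj * (1 - cj*s + (cj*s)^2/2) ≤ 1 - Lj - s/aj) →
      ∀ v : ℝ, aj ≤ v → v ≤ aj + 1/8 →
        Real.exp (-∫ s in (2:ℝ)..(v+1), ξ s) ≤ 1 - Real.log v := by
    intro aj cj Cj Uj Lj h1 h2 hc hcx hC hU hL hkey v hva hvb
    have hs0 : 0 ≤ v - aj := by linarith
    have hs8 : v - aj ≤ 1/8 := by linarith
    have hsplit : (∫ x in (2:ℝ)..(aj+1), ξ x) + (∫ x in (aj+1)..(v+1), ξ x)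
        = ∫ x in (2:ℝ)..(v+1), ξ x :=
      intervalIntegral.integral_add_adjacent_intervals
        (hξint _ _ (by norm_num) (by linarith)) (hξint _ _ (by linarith) (by linarith))
    have hlb2 : cj * ((v+1) - (aj+1)) ≤ ∫ x in (aj+1)..(v+1), ξ x :=
      hintlb (aj+1) (v+1) cj (by linarith) (by linarith) hcx
    have hIlb : Cj + cj * (v - aj) ≤ ∫ x in (2:ℝ)..(v+1), ξ x := by
      have he : (v+1) - (aj+1) = v - aj := by ring
      rw [he] at hlb2
      linarith
    have hexp1 : Real.exp (-∫ x in (2:ℝ)..(v+1), ξ x)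
        ≤ Real.exp (-Cj) * Real.exp (-(cj*(v-aj))) := by
      rw [← Real.exp_add]
      exact Real.exp_le_exp.2 (by linarith)
    have hexp2 : Real.exp (-(cj*(v-aj))) ≤ 1 - cj*(v-aj) + (cj*(v-aj))^2/2 :=
      exp_neg_ub _ (by positivity)
    have hq : 0 < 1 - cj*(v-aj) + (cj*(v-aj))^2/2 := by
      nlinarith [sq_nonneg (cj*(v-aj) - 1)]
    have hUpos : 0 < Real.exp (-Cj) := Real.exp_pos _
    have hlog : Real.log v ≤ Lj + (v - aj)/aj := by
      have h0 : (0:ℝ) < aj := by linarith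
      have hv0 : (0:ℝ) < v := by linarith
      have hdiv : Real.log v - Real.log aj = Real.log (v/aj) :=
        (Real.log_div hv0.ne' h0.ne').symm
      have hd : Real.log (v/aj) ≤ v/aj - 1 := Real.log_le_sub_one_of_pos (by positivity)
      have he : v/aj - 1 = (v - aj)/aj := by
        field_simp
      linarith [hdiv, hd, he]
    have hk := hkey (v - aj) hs0 hs8
    have hmid : Real.exp (-Cj) * Real.exp (-(cj*(v-aj)))
        ≤ Uj * (1 - cj*(v-aj) + (cj*(v-aj))^2/2) := by
      have hexp3 : Real.exp (-Cj) * Real.exp (-(cj*(v-aj)))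
          ≤ Real.exp (-Cj) * (1 - cj*(v-aj) + (cj*(v-aj))^2/2) := by
        exact mul_le_mul_of_nonneg_left hexp2 hUpos.le
      have : Real.exp (-Cj) * (1 - cj*(v-aj) + (cj*(v-aj))^2/2)
          ≤ Uj * (1 - cj*(v-aj) + (cj*(v-aj))^2/2) :=
        mul_le_mul_of_nonneg_right hU hq.le
      linarith
    linarith [hexp1, hmid, hk, hlog]
  have hc0 : (157/125:ℝ) ≤ ξ (2) := by
    apply hxival _ _ (by norm_num) (by norm_num) (by norm_num)
    norm_num
  have hc1 : (339/250:ℝ) ≤ ξ (17/8) := by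
    apply hxival _ _ (by norm_num) (by norm_num) (by norm_num)
    norm_num
  have hc2 : (1449/1000:ℝ) ≤ ξ (18/8) := by
    apply hxival _ _ (by norm_num) (by norm_num) (by norm_num)
    norm_num
  have hc3 : (192/125:ℝ) ≤ ξ (19/8) := by
    apply hxival _ _ (by norm_num) (by norm_num) (by norm_num)
    norm_num
  have hc4 : (809/500:ℝ) ≤ ξ (20/8) := by
    apply hxival _ _ (by norm_num) (by norm_num) (by norm_num)
    norm_num
  have hc5 : (339/200:ℝ) ≤ ξ (21/8) := by
    apply hxival _ _ (by norm_num) (by norm_num) (by norm_num)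
    norm_num
  have hc6 : (221/125:ℝ) ≤ ξ (22/8) := by
    apply hxival _ _ (by norm_num) (by norm_num) (by norm_num)
    norm_num
  have hc7 : (1837/1000:ℝ) ≤ ξ (23/8) := by
    apply hxival _ _ (by norm_num) (by norm_num) (by norm_num)
    norm_num
  have hI0 : ((0:ℝ)) ≤ ∫ s in (2:ℝ)..(2:ℝ), ξ s := by
    rw [intervalIntegral.integral_same]
  have hI1 : ((157/1000:ℝ)) ≤ ∫ s in (2:ℝ)..(17/8:ℝ), ξ s := by
    have hadd := intervalIntegral.integral_add_adjacent_intervals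
      (hξint 2 (2) (by norm_num) (by norm_num))
      (hξint (2) (17/8) (by norm_num) (by norm_num))
    have hpiece := hintlb (2) (17/8) (157/125) (by norm_num) (by norm_num) hc0
    linarith
  have hI2 : ((653/2000:ℝ)) ≤ ∫ s in (2:ℝ)..(18/8:ℝ), ξ s := by
    have hadd := intervalIntegral.integral_add_adjacent_intervals
      (hξint 2 (17/8) (by norm_num) (by norm_num))
      (hξint (17/8) (18/8) (by norm_num) (by norm_num))
    have hpiece := hintlb (17/8) (18/8) (339/250) (by norm_num) (by norm_num) hc1
    linarith
  have hI3 : ((4061/8000:ℝ)) ≤ ∫ s in (2:ℝ)..(19/8:ℝ), ξ s := by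
    have hadd := intervalIntegral.integral_add_adjacent_intervals
      (hξint 2 (18/8) (by norm_num) (by norm_num))
      (hξint (18/8) (19/8) (by norm_num) (by norm_num))
    have hpiece := hintlb (18/8) (19/8) (1449/1000) (by norm_num) (by norm_num) hc2
    linarith
  have hI4 : ((5597/8000:ℝ)) ≤ ∫ s in (2:ℝ)..(20/8:ℝ), ξ s := by
    have hadd := intervalIntegral.integral_add_adjacent_intervals
      (hξint 2 (19/8) (by norm_num) (by norm_num))
      (hξint (19/8) (20/8) (by norm_num) (by norm_num))
    have hpiece := hintlb (19/8) (20/8) (192/125) (by norm_num) (by norm_num) hc3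
    linarith
  have hI5 : ((1443/1600:ℝ)) ≤ ∫ s in (2:ℝ)..(21/8:ℝ), ξ s := by
    have hadd := intervalIntegral.integral_add_adjacent_intervals
      (hξint 2 (20/8) (by norm_num) (by norm_num))
      (hξint (20/8) (21/8) (by norm_num) (by norm_num))
    have hpiece := hintlb (20/8) (21/8) (809/500) (by norm_num) (by norm_num) hc4
    linarith
  have hI6 : ((891/800:ℝ)) ≤ ∫ s in (2:ℝ)..(22/8:ℝ), ξ s := by
    have hadd := intervalIntegral.integral_add_adjacent_intervals
      (hξint 2 (21/8) (by norm_num) (by norm_num))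
      (hξint (21/8) (22/8) (by norm_num) (by norm_num))
    have hpiece := hintlb (21/8) (22/8) (339/200) (by norm_num) (by norm_num) hc5
    linarith
  have hI7 : ((5339/4000:ℝ)) ≤ ∫ s in (2:ℝ)..(23/8:ℝ), ξ s := by
    have hadd := intervalIntegral.integral_add_adjacent_intervals
      (hξint 2 (22/8) (by norm_num) (by norm_num))
      (hξint (22/8) (23/8) (by norm_num) (by norm_num))
    have hpiece := hintlb (22/8) (23/8) (221/125) (by norm_num) (by norm_num) hc6
    linarith
  have hbase12 : ∀ v : ℝ, 1 ≤ v → v ≤ 2 →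
      Real.exp (-∫ s in (2:ℝ)..(v+1), ξ s) ≤ 1 - Real.log v := by
    intro v hv1 hv2
    rcases le_total v (9/8) with hcase | hcase
    · apply hstep (1) (157/125) (0) (1) (0) (by norm_num) (by norm_num) (by norm_num)
        (by rw [show (1:ℝ)+1 = (2:ℝ) by norm_num]; exact hc0)
        (by rw [show (1:ℝ)+1 = (2:ℝ) by norm_num]; exact hI0)
        (hexpneg _ _ (by norm_num) (by norm_num) (by norm_num))
        (hlogub _ _ (by norm_num) (by norm_num) (by norm_num))
        (by
          intro s hsa hsb
          nlinarith [mul_nonneg hsa (by linarith : (0:ℝ) ≤ 1/8 - s), sq_nonneg s,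
            mul_nonneg hsa hsa])
        v (by linarith) (by linarith)
    rcases le_total v (10/8) with hcase | hcase
    · apply hstep (9/8) (339/250) (157/1000) (85471/100000) (11779/100000) (by norm_num) (by norm_num) (by norm_num)
        (by rw [show (9/8:ℝ)+1 = (17/8:ℝ) by norm_num]; exact hc1)
        (by rw [show (9/8:ℝ)+1 = (17/8:ℝ) by norm_num]; exact hI1)
        (hexpneg _ _ (by norm_num) (by norm_num) (by norm_num))
        (hlogub _ _ (by norm_num) (by norm_num) (by norm_num))
        (by
          intro s hsa hsb
          nlinarith [mul_nonneg hsa (by linarith : (0:ℝ) ≤ 1/8 - s), sq_nonneg s,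
            mul_nonneg hsa hsa])
        v (by linarith) (by linarith)
    rcases le_total v (11/8) with hcase | hcase
    · apply hstep (10/8) (1449/1000) (653/2000) (72147/100000) (4463/20000) (by norm_num) (by norm_num) (by norm_num)
        (by rw [show (10/8:ℝ)+1 = (18/8:ℝ) by norm_num]; exact hc2)
        (by rw [show (10/8:ℝ)+1 = (18/8:ℝ) by norm_num]; exact hI2)
        (hexpneg _ _ (by norm_num) (by norm_num) (by norm_num))
        (hlogub _ _ (by norm_num) (by norm_num) (by norm_num))
        (by
          intro s hsa hsb
          nlinarith [mul_nonneg hsa (by linarith : (0:ℝ) ≤ 1/8 - s), sq_nonneg s,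
            mul_nonneg hsa hsa])
        v (by linarith) (by linarith)
    rcases le_total v (12/8) with hcase | hcase
    · apply hstep (11/8) (192/125) (4061/8000) (15051/25000) (3981/12500) (by norm_num) (by norm_num) (by norm_num)
        (by rw [show (11/8:ℝ)+1 = (19/8:ℝ) by norm_num]; exact hc3)
        (by rw [show (11/8:ℝ)+1 = (19/8:ℝ) by norm_num]; exact hI3)
        (hexpneg _ _ (by norm_num) (by norm_num) (by norm_num))
        (hlogub _ _ (by norm_num) (by norm_num) (by norm_num))
        (by
          intro s hsa hsb
          nlinarith [mul_nonneg hsa (by linarith : (0:ℝ) ≤ 1/8 - s), sq_nonneg s,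
            mul_nonneg hsa hsa])
        v (by linarith) (by linarith)
    rcases le_total v (13/8) with hcase | hcase
    · apply hstep (12/8) (809/500) (5597/8000) (49717/100000) (20277/50000) (by norm_num) (by norm_num) (by norm_num)
        (by rw [show (12/8:ℝ)+1 = (20/8:ℝ) by norm_num]; exact hc4)
        (by rw [show (12/8:ℝ)+1 = (20/8:ℝ) by norm_num]; exact hI4)
        (hexpneg _ _ (by norm_num) (by norm_num) (by norm_num))
        (hlogub _ _ (by norm_num) (by norm_num) (by norm_num))
        (by
          intro s hsa hsb
          nlinarith [mul_nonneg hsa (by linarith : (0:ℝ) ≤ 1/8 - s), sq_nonneg s,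
            mul_nonneg hsa hsa])
        v (by linarith) (by linarith)
    rcases le_total v (14/8) with hcase | hcase
    · apply hstep (13/8) (339/200) (1443/1600) (20339/50000) (24283/50000) (by norm_num) (by norm_num) (by norm_num)
        (by rw [show (13/8:ℝ)+1 = (21/8:ℝ) by norm_num]; exact hc5)
        (by rw [show (13/8:ℝ)+1 = (21/8:ℝ) by norm_num]; exact hI5)
        (hexpneg _ _ (by norm_num) (by norm_num) (by norm_num))
        (hlogub _ _ (by norm_num) (by norm_num) (by norm_num))
        (by
          intro s hsa hsb
          nlinarith [mul_nonneg hsa (by linarith : (0:ℝ) ≤ 1/8 - s), sq_nonneg s,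
            mul_nonneg hsa hsa])
        v (by linarith) (by linarith)
    rcases le_total v (15/8) with hcase | hcase
    · apply hstep (14/8) (221/125) (891/800) (16511/50000) (55991/100000) (by norm_num) (by norm_num) (by norm_num)
        (by rw [show (14/8:ℝ)+1 = (22/8:ℝ) by norm_num]; exact hc6)
        (by rw [show (14/8:ℝ)+1 = (22/8:ℝ) by norm_num]; exact hI6)
        (hexpneg _ _ (by norm_num) (by norm_num) (by norm_num))
        (hlogub _ _ (by norm_num) (by norm_num) (by norm_num))
        (by
          intro s hsa hsb
          nlinarith [mul_nonneg hsa (by linarith : (0:ℝ) ≤ 1/8 - s), sq_nonneg s,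
            mul_nonneg hsa hsa])
        v (by linarith) (by linarith)
    apply hstep (15/8) (1837/1000) (5339/4000) (13319/50000) (6291/10000) (by norm_num) (by norm_num) (by norm_num)
        (by rw [show (15/8:ℝ)+1 = (23/8:ℝ) by norm_num]; exact hc7)
        (by rw [show (15/8:ℝ)+1 = (23/8:ℝ) by norm_num]; exact hI7)
        (hexpneg _ _ (by norm_num) (by norm_num) (by norm_num))
        (hlogub _ _ (by norm_num) (by norm_num) (by norm_num))
        (by
          intro s hsa hsb
          nlinarith [mul_nonneg hsa (by linarith : (0:ℝ) ≤ 1/8 - s), sq_nonneg s,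
            mul_nonneg hsa hsa])
        v (by linarith) (by linarith)
  have hbase' : ∀ v : ℝ, 1 ≤ v → v ≤ 2 → g v ≤ ρ v := by
    intro v h1 h2
    rw [hρ12 v h1 h2]
    exact hbase12 v h1 h2
  have hzero : ∀ t : ℝ, 0 ≤ t → t ≤ 1 → (∫ s in (1:ℝ)..t, ξ s) = 0 := by
    intro t h0 h1
    have hcg : Set.EqOn ξ (fun _ => (0:ℝ)) (Set.uIcc 1 t) := by
      intro s hs
      rw [Set.uIcc_of_ge h1] at hs
      exact hξ0 s (le_trans h0 hs.1) hs.2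
    rw [intervalIntegral.integral_congr hcg]
    simp
  intro u hu
  have hu0 : (0:ℝ) ≤ u := by linarith
  constructor
  · -- lower bound
    rcases le_total u 2 with hu2 | hu2
    · exact hbase' u hu hu2
    · have hgron := gronwall (fun t => ρ t - g t) 2 u (by norm_num) hu2
        (by
          apply ContinuousOn.sub
          · exact hρcont.mono (fun t ht => by
              simp only [Set.mem_Icc, Set.mem_Ici] at *
              linarith [ht.1])
          · exact (hcont_g u (by linarith)).mono (fun t ht => by
              simp only [Set.mem_Icc] at *
              exact ⟨by linarith [ht.1], ht.2⟩))
        (fun t ht => by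
          have := hbase' t (by linarith [ht.1]) ht.2
          simpa using this)
        (fun v hv hvb => by
          have hint1 := hρint (v-1) v (by linarith) (by linarith)
          have hint2 : IntervalIntegrable g volume (v-1) v :=
            ((hcont_g u (by linarith)).mono (Set.uIcc_subset_Icc
              ⟨by linarith, by linarith⟩ ⟨by linarith, by linarith⟩)).intervalIntegrable
          have heq : (∫ t in (v-1)..v, (ρ t - g t))
              = (∫ t in (v-1)..v, ρ t) - ∫ t in (v-1)..v, g t :=
            intervalIntegral.integral_sub hint1 hint2
          have h1 := hρid v (by linarith)
          have h2 := hG v (by linarith)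
          simpa [heq] using (by linarith : (∫ t in (v-1)..v, ρ t)
            - (∫ t in (v-1)..v, g t) ≤ v * (ρ v - g v)))
      have hfin := hgron u ⟨by linarith, le_rfl⟩
      simpa using hfin
  · -- upper bound
    have hgron := gronwall (fun t => h t - ρ t) 1 u le_rfl hu
      (by
        apply ContinuousOn.sub
        · exact (hcont_h u (by linarith)).mono (fun t ht => by
            simp only [Set.mem_Icc] at *
            exact ⟨by linarith [ht.1], ht.2⟩)
        · exact hρcont.mono (fun t ht => by
            simp only [Set.mem_Icc, Set.mem_Ici] at *
            linarith [ht.1]))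
      (fun t ht => by
        have ht0 : (0:ℝ) ≤ t := by linarith [ht.1]
        have hht : h t = 1 := by
          rw [hh]
          simp only
          rw [hzero t ht0 ht.2]
          simp
        have := hρ1 t ht0 ht.2
        rw [hht, this]
        norm_num)
      (fun v hv hvb => by
        have hint1 := hρint (v-1) v (by linarith) (by linarith)
        have hint2 : IntervalIntegrable h volume (v-1) v :=
          ((hcont_h u (by linarith)).mono (Set.uIcc_subset_Icc
            ⟨by linarith, by linarith⟩ ⟨by linarith, by linarith⟩)).intervalIntegrable
        have heq : (∫ t in (v-1)..v, (h t - ρ t))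
            = (∫ t in (v-1)..v, h t) - ∫ t in (v-1)..v, ρ t :=
          intervalIntegral.integral_sub hint2 hint1
        have h1 := hρid v (by linarith)
        have h2 := hH v (by linarith)
        simpa [heq] using (by linarith : (∫ t in (v-1)..v, h t)
          - (∫ t in (v-1)..v, ρ t) ≤ v * (h v - ρ v)))
    have hfin := hgron u ⟨by linarith, le_rfl⟩
    simpa using hfin
end

section
/- (Rankin's upper bound) For all reals x ≥ 1, y ≥ 2 and every σ > 0, Ψ(x,y) ≤ x^{σ} · ∏_{p prime, p ≤ y} (1 − p^{−σ})^{−1}. -/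
open scoped Classical

/-- `Ψ(x,y)`: the number of integers `1 ≤ n ≤ x` all of whose prime factors are `≤ y`. -/
noncomputable def Psi (x y : ℝ) : ℕ :=
  ((Finset.Icc 1 ⌊x⌋₊).filter fun n => ∀ p : ℕ, p.Prime → p ∣ n → (p : ℝ) ≤ y).card

/-- Rankin's upper bound: for `x ≥ 1`, `y ≥ 2`, `σ > 0`,
`Ψ(x,y) ≤ x^σ · ∏_{p ≤ y prime} (1 − p^{−σ})⁻¹`. -/
theorem rankin_upper_bound (x y σ : ℝ) (hx : 1 ≤ x) (hy : 2 ≤ y) (hσ : 0 < σ) :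
    (Psi x y : ℝ) ≤
      x ^ σ * ∏ p ∈ (Finset.Icc 1 ⌊y⌋₊).filter Nat.Prime,
        (1 - (p : ℝ) ^ (-σ))⁻¹ := by
  classical
  set N : ℕ := ⌊y⌋₊ + 1
  -- the completely multiplicative function n ↦ n^{-σ}
  set f : ℕ →* ℝ :=
    { toFun := fun n => (n : ℝ) ^ (-σ)
      map_one' := by simp
      map_mul' := fun m n => by
        push_cast
        exact Real.mul_rpow (Nat.cast_nonneg m) (Nat.cast_nonneg n) } with hf
  have hfval : ∀ n : ℕ, f n = (n : ℝ) ^ (-σ) := fun n => rfl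
  have hprime : ∀ {p : ℕ}, p.Prime → ‖f p‖ < 1 := by
    intro p hp
    rw [hfval, Real.norm_eq_abs, abs_of_nonneg (Real.rpow_nonneg (Nat.cast_nonneg p) _)]
    rw [Real.rpow_neg (Nat.cast_nonneg p)]
    rw [inv_lt_one_iff₀]
    right
    exact Real.one_lt_rpow_iff_of_pos (by exact_mod_cast hp.pos) |>.2
      (Or.inl ⟨by exact_mod_cast hp.one_lt, hσ⟩)
  obtain ⟨hsum, hHasSum⟩ :=
    EulerProduct.summable_and_hasSum_smoothNumbers_prod_primesBelow_geometric (f := f) hprime N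
  -- rewrite the prime product index set
  have hset : N.primesBelow = (Finset.Icc 1 ⌊y⌋₊).filter Nat.Prime := by
    ext p
    simp only [Nat.primesBelow, Finset.mem_filter, Finset.mem_range, Finset.mem_Icc,
      Nat.lt_succ_iff, N]
    constructor
    · rintro ⟨h1, h2⟩; exact ⟨⟨h2.one_lt.le, h1⟩, h2⟩
    · rintro ⟨⟨_, h1⟩, h2⟩; exact ⟨h1, h2⟩
  have hprod : (∏ p ∈ N.primesBelow, (1 - f p)⁻¹) =
      ∏ p ∈ (Finset.Icc 1 ⌊y⌋₊).filter Nat.Prime, (1 - (p : ℝ) ^ (-σ))⁻¹ := by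
    rw [hset]
    rfl
  -- the has-sum over smooth numbers as an indicator sum over ℕ
  have hInd : HasSum ((Nat.smoothNumbers N : Set ℕ).indicator f)
      (∏ p ∈ N.primesBelow, (1 - f p)⁻¹) :=
    (hasSum_subtype_iff_indicator).1 hHasSum
  set A := (Finset.Icc 1 ⌊x⌋₊).filter fun n => ∀ p : ℕ, p.Prime → p ∣ n → (p : ℝ) ≤ y with hA
  have hAmem : ∀ n ∈ A, n ∈ Nat.smoothNumbers N := by
    intro n hn
    rw [hA, Finset.mem_filter, Finset.mem_Icc] at hn
    obtain ⟨⟨h1, _⟩, h2⟩ := hn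
    rw [Nat.mem_smoothNumbers]
    refine ⟨by omega, fun p hp => ?_⟩
    have hpp : p.Prime := Nat.prime_of_mem_primeFactorsList hp
    have hdvd : p ∣ n := Nat.dvd_of_mem_primeFactorsList hp
    have := h2 p hpp hdvd
    have : p ≤ ⌊y⌋₊ := Nat.le_floor this
    omega
  -- sum over A of the indicator is ≤ the product
  have hsumle : ∑ n ∈ A, f n ≤ ∏ p ∈ N.primesBelow, (1 - f p)⁻¹ := by
    have h1 : ∑ n ∈ A, f n = ∑ n ∈ A, (Nat.smoothNumbers N : Set ℕ).indicator f n := by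
      refine Finset.sum_congr rfl fun n hn => ?_
      rw [Set.indicator_of_mem (hAmem n hn)]
    rw [h1]
    refine sum_le_hasSum A (fun n _ => ?_) hInd
    exact Set.indicator_nonneg (fun m _ => Real.rpow_nonneg (Nat.cast_nonneg m) _) n
  -- Ψ ≤ ∑ n ∈ A, x^σ * n^{-σ}
  have hx0 : (0:ℝ) < x := lt_of_lt_of_le one_pos hx
  have hcard : (Psi x y : ℝ) ≤ ∑ n ∈ A, x ^ σ * f n := by
    have hstep : ((Psi x y : ℕ) : ℝ) = ∑ n ∈ A, (1:ℝ) := by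
      rw [Psi, ← hA]; simp
    rw [hstep]
    refine Finset.sum_le_sum fun n hn => ?_
    rw [hA, Finset.mem_filter, Finset.mem_Icc] at hn
    obtain ⟨⟨h1, h1'⟩, _⟩ := hn
    have hn0 : (0:ℝ) < n := by exact_mod_cast h1
    have hnx : (n : ℝ) ≤ x := le_trans (by exact_mod_cast h1') (Nat.floor_le hx0.le)
    have h : (1:ℝ) ≤ (x / n) ^ σ := Real.one_le_rpow ((one_le_div hn0).2 hnx) hσ.le
    rw [Real.div_rpow hx0.le (Nat.cast_nonneg n), div_eq_mul_inv,
      ← Real.rpow_neg (Nat.cast_nonneg n)] at h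
    exact h
  calc (Psi x y : ℝ) ≤ ∑ n ∈ A, x ^ σ * f n := hcard
    _ = x ^ σ * ∑ n ∈ A, f n := by rw [Finset.mul_sum]
    _ ≤ x ^ σ * ∏ p ∈ N.primesBelow, (1 - f p)⁻¹ := by
        exact mul_le_mul_of_nonneg_left hsumle (Real.rpow_nonneg hx0.le _)
    _ = _ := by rw [hprod]
end
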